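/- With g = ‖h‖² > 0, γ > 0, and μ = -1/g + 1/(g√(1+γg)), the matrix Q = I + μ h hᴴ satisfies Q (I + γ h hᴴ) Q = I. -/

import Mathlib

theorem stmt_2 (n : ℕ) (h : Fin n → ℂ) (g γ μ : ℝ)
    (hne : h ≠ 0)
    (hg : g = ∑ i, ‖h i‖^2) (hγ : 0 < γ)
    (hμ : μ = -1/g + 1/(g * Real.sqrt (1 + γ*g))) :
    let Q : Matrix (Fin n) (Fin n) ℂ :=
      1 + (μ : ℂ) • Matrix.vecMulVec h (star h)
    Q * (1 + (γ : ℂ) • Matrix.vecMulVec h (star h)) * Q = 1 := by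
  intro Q
  set P : Matrix (Fin n) (Fin n) ℂ := Matrix.vecMulVec h (star h) with hP
  -- g > 0
  have hgpos : 0 < g := by
    rw [hg]
    have : ∃ i, h i ≠ 0 := by
      by_contra hc
      push_neg at hc
      exact hne (funext hc)
    obtain ⟨i, hi⟩ := this
    have : 0 < ‖h i‖^2 := pow_pos (norm_pos_iff.mpr hi) 2
    exact lt_of_lt_of_le this (Finset.single_le_sum (f := fun i => ‖h i‖^2)
      (fun j _ => by positivity) (Finset.mem_univ i))
  have hgne : (g : ℝ) ≠ 0 := ne_of_gt hgpos
  set s := Real.sqrt (1 + γ * g) with hs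
  have hspos : 0 < s := Real.sqrt_pos.mpr (by nlinarith)
  have hs2 : s ^ 2 = 1 + γ * g := Real.sq_sqrt (by nlinarith)
  -- P * P = g • P
  have hPP : P * P = (g : ℂ) • P := by
    ext i j
    simp only [hP, Matrix.mul_apply, Matrix.vecMulVec_apply, Matrix.smul_apply,
      Pi.star_apply, smul_eq_mul]
    have : ∀ k, h i * star (h k) * (h k * star (h j))
        = ((‖h k‖ : ℂ)^2) * (h i * star (h j)) := by
      intro k
      have : h k * star (h k) = ((‖h k‖ : ℂ)^2) := by
        rw [RCLike.star_def, Complex.mul_conj]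
        push_cast [Complex.normSq_eq_norm_sq]
        norm_num
      linear_combination h i * star (h j) * this
    rw [Finset.sum_congr rfl (fun k _ => this k), ← Finset.sum_mul]
    congr 1
    rw [hg]
    push_cast
    ring
  -- the scalar identity
  have key : (2*μ + γ + μ^2*g + 2*μ*γ*g + μ^2*γ*g^2 : ℝ) = 0 := by
    have hsne : s ≠ 0 := ne_of_gt hspos
    have ha : (1 + μ*g) * s = 1 := by
      rw [hμ]; field_simp; ring
    have h2 : (1 + μ*g)^2 * (1 + γ*g) = 1 := by
      linear_combination ((1 + μ*g)*s + 1) * ha - (1 + μ*g)^2 * hs2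
    have h3 : (2*μ + γ + μ^2*g + 2*μ*γ*g + μ^2*γ*g^2) * g = 0 * g := by
      linear_combination h2
    exact mul_right_cancel₀ hgne h3
  -- expand
  have expand : Q * (1 + (γ : ℂ) • P) * Q
      = 1 + ((2*μ + γ + μ^2*g + 2*μ*γ*g + μ^2*γ*g^2 : ℝ) : ℂ) • P := by
    simp only [Q, ← hP, mul_add, add_mul, one_mul, mul_one, Matrix.smul_mul, Matrix.mul_smul,
      hPP, smul_smul]
    push_cast
    module
  rw [expand, key]
  simp
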